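/- Let 𝓔 be a channel on a tracial C*-algebra (A, τ) and let M_𝓔 be its multiplicative domain. Then for all density elements σ, ρ ∈ D_τ(A) ∩ M_𝓔, the fidelity is preserved: F_τ(𝓔(σ), 𝓔(ρ)) = F_τ(σ, ρ); hence 𝓔 is isometric for the Bures metric on D_τ(A) ∩ M_𝓔. -/

import Mathlib

open scoped ComplexOrder NNReal

/-- Fidelity F_τ(σ,ρ) = τ((ρ^{1/2} σ ρ^{1/2})^{1/2}) in a C*-algebra with trace τ. -/
noncomputable def cFid {A : Type*} [CStarAlgebra A] [PartialOrder A] [StarOrderedRing A]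
    (τ : A →ₗ[ℂ] ℂ) (σ ρ : A) : ℝ :=
  (τ (CFC.sqrt (CFC.sqrt ρ * σ * CFC.sqrt ρ))).re

/-- The Bures distance d_B(σ,ρ) = √(1 - F_τ(σ,ρ)). -/
noncomputable def cdB {A : Type*} [CStarAlgebra A] [PartialOrder A] [StarOrderedRing A]
    (τ : A →ₗ[ℂ] ℂ) (σ ρ : A) : ℝ :=
  Real.sqrt (1 - cFid τ σ ρ)

/-- Membership in the multiplicative domain of a linear map. -/
def InMultDomain {A : Type*} [CStarAlgebra A] (E : A →ₗ[ℂ] A) (x : A) : Prop :=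
  ∀ y : A, E (x * y) = E x * E y ∧ E (y * x) = E y * E x

section Aux

variable {A : Type*} [CStarAlgebra A]

namespace InMultDomain

variable {E : A →ₗ[ℂ] A}

lemma zero : InMultDomain E 0 := by intro y; simp

lemma add {x x' : A} (hx : InMultDomain E x) (hx' : InMultDomain E x') :
    InMultDomain E (x + x') := by
  intro y
  constructor
  · rw [add_mul, map_add, map_add, (hx y).1, (hx' y).1, add_mul]
  · rw [mul_add, map_add, map_add, (hx y).2, (hx' y).2, mul_add]

lemma csmul {x : A} (c : ℂ) (hx : InMultDomain E x) : InMultDomain E (c • x) := by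
  intro y
  constructor
  · rw [smul_mul_assoc, map_smul, map_smul, (hx y).1, smul_mul_assoc]
  · rw [mul_smul_comm, map_smul, map_smul, (hx y).2, mul_smul_comm]

lemma rsmul {x : A} (c : ℝ) (hx : InMultDomain E x) : InMultDomain E (c • x) := by
  have : c • x = (c : ℂ) • x := by
    rw [← algebraMap_smul ℂ c x]; norm_num
  rw [this]
  exact hx.csmul _

lemma mul {x x' : A} (hx : InMultDomain E x) (hx' : InMultDomain E x') :
    InMultDomain E (x * x') := by
  intro y
  constructor
  · rw [mul_assoc, (hx (x' * y)).1, (hx' y).1, (hx x').1, mul_assoc]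
  · rw [← mul_assoc, (hx' (y * x)).2, (hx x').1, (hx y).2, mul_assoc]

lemma pow_succ_mem {x : A} (hx : InMultDomain E x) (n : ℕ) :
    InMultDomain E (x ^ (n + 1)) := by
  induction n with
  | zero => simpa using hx
  | succ n ih => rw [pow_succ]; exact ih.mul hx

end InMultDomain

variable (E : A →ₗ[ℂ] A)

lemma isClosed_inMultDomain (hE : Continuous E) : IsClosed {x : A | InMultDomain E x} := by
  have : {x : A | InMultDomain E x} =
      ⋂ y : A, ({x : A | E (x * y) = E x * E y} ∩ {x : A | E (y * x) = E y * E x}) := by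
    ext x
    simp only [Set.mem_iInter, Set.mem_inter_iff, Set.mem_setOf_eq]
    rfl
  rw [this]
  refine isClosed_iInter fun y => IsClosed.inter ?_ ?_
  · exact isClosed_eq (hE.comp (continuous_id.mul continuous_const))
      (hE.mul continuous_const)
  · exact isClosed_eq (hE.comp (continuous_const.mul continuous_id))
      (continuous_const.mul hE)

end Aux

section Positivity

variable {A : Type*} [CStarAlgebra A] [PartialOrder A] [StarOrderedRing A]
variable (E : A →ₗ[ℂ] A)

lemma E_mono (hEpos : ∀ a : A, 0 ≤ a → 0 ≤ E a) {a b : A} (h : a ≤ b) : E a ≤ E b := by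
  have := hEpos (b - a) (sub_nonneg.mpr h)
  rw [map_sub] at this
  exact sub_nonneg.mp this

lemma norm_E_of_selfAdjoint (hEpos : ∀ a : A, 0 ≤ a → 0 ≤ E a) {h : A}
    (hh : IsSelfAdjoint h) : ‖E h‖ ≤ 3 * ‖E 1‖ * ‖h‖ := by
  set u : A := E (algebraMap ℝ A ‖h‖) with hu_def
  have halg : (0 : A) ≤ algebraMap ℝ A ‖h‖ := by
    set b : A := algebraMap ℝ A (Real.sqrt ‖h‖) with hb_def
    have hbsa : star b = b := by
      rw [hb_def, ← algebraMap_star_comm, star_trivial]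
    have : algebraMap ℝ A ‖h‖ = star b * b := by
      rw [hbsa, hb_def, ← map_mul, Real.mul_self_sqrt (norm_nonneg h)]
    rw [this]
    exact star_mul_self_nonneg b
  have hu_nonneg : 0 ≤ u := hEpos _ halg
  have h_le : E h ≤ u := E_mono E hEpos hh.le_algebraMap_norm_self
  have h_ge : -u ≤ E h := by
    have := E_mono E hEpos hh.neg_algebraMap_norm_le_self
    rwa [map_neg] at this
  have h1 : (0 : A) ≤ E h + u := by
    rw [← neg_add_cancel u]
    exact add_le_add_left h_ge u
  have h2 : E h + u ≤ u + u := add_le_add_left h_le u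
  have h3 : ‖E h + u‖ ≤ ‖u + u‖ := CStarAlgebra.norm_le_norm_of_nonneg_of_le h1 h2
  have hu_norm : ‖u‖ = ‖h‖ * ‖E 1‖ := by
    have : E (algebraMap ℝ A ‖h‖) = ‖h‖ • E 1 := by
      rw [Algebra.algebraMap_eq_smul_one, E.map_smul_of_tower]
    rw [hu_def, this, norm_smul, Real.norm_eq_abs, abs_of_nonneg (norm_nonneg h)]
  calc ‖E h‖ = ‖E h + u + -u‖ := by congr 1; abel
    _ ≤ ‖E h + u‖ + ‖-u‖ := norm_add_le _ _
    _ ≤ ‖u + u‖ + ‖u‖ := by rw [norm_neg]; exact add_le_add_left h3 _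
    _ ≤ (‖u‖ + ‖u‖) + ‖u‖ := add_le_add_left (norm_add_le _ _) _
    _ = 3 * ‖u‖ := by ring
    _ = 3 * ‖E 1‖ * ‖h‖ := by rw [hu_norm]; ring

open ComplexStarModule in
lemma E_continuous (hEpos : ∀ a : A, 0 ≤ a → 0 ≤ E a) : Continuous E := by
  refine AddMonoidHomClass.continuous_of_bound E (6 * ‖E 1‖) fun a => ?_
  have hre : ‖(ℜ a : A)‖ ≤ ‖a‖ := by
    rw [realPart_apply_coe, norm_smul]
    calc ‖(2 : ℝ)⁻¹‖ * ‖a + star a‖ ≤ 2⁻¹ * (‖a‖ + ‖star a‖) := by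
          rw [Real.norm_eq_abs, abs_of_nonneg (by norm_num : ((2:ℝ)⁻¹) ≥ 0)]
          gcongr
          exact norm_add_le _ _
      _ = ‖a‖ := by rw [norm_star]; ring
  have him : ‖(ℑ a : A)‖ ≤ ‖a‖ := by
    rw [imaginaryPart_apply_coe, norm_smul, norm_smul]
    calc ‖-Complex.I‖ * (‖(2 : ℝ)⁻¹‖ * ‖a - star a‖) ≤ 1 * (2⁻¹ * (‖a‖ + ‖star a‖)) := by
          rw [norm_neg, Complex.norm_I, Real.norm_eq_abs,
            abs_of_nonneg (by norm_num : ((2:ℝ)⁻¹) ≥ 0)]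
          gcongr
          exact norm_sub_le _ _
      _ = ‖a‖ := by rw [norm_star]; ring
  calc ‖E a‖ = ‖E (ℜ a : A) + Complex.I • E (ℑ a : A)‖ := by
        conv_lhs => rw [← realPart_add_I_smul_imaginaryPart a]
        rw [map_add, map_smul]
    _ ≤ ‖E (ℜ a : A)‖ + ‖Complex.I • E (ℑ a : A)‖ := norm_add_le _ _
    _ = ‖E (ℜ a : A)‖ + ‖E (ℑ a : A)‖ := by rw [norm_smul, Complex.norm_I, one_mul]
    _ ≤ 3 * ‖E 1‖ * ‖(ℜ a : A)‖ + 3 * ‖E 1‖ * ‖(ℑ a : A)‖ :=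
        add_le_add (norm_E_of_selfAdjoint E hEpos (ℜ a).property)
          (norm_E_of_selfAdjoint E hEpos (ℑ a).property)
    _ ≤ 3 * ‖E 1‖ * ‖a‖ + 3 * ‖E 1‖ * ‖a‖ := by
        have : (0:ℝ) ≤ 3 * ‖E 1‖ := by positivity
        gcongr
    _ = 6 * ‖E 1‖ * ‖a‖ := by ring

end Positivity

section CfcPoly

variable {A : Type*} [CStarAlgebra A] [PartialOrder A] [StarOrderedRing A]

lemma cfc_polynomial_eval (x : A) (hx : IsSelfAdjoint x) (q : Polynomial ℝ) :
    cfc (fun t : ℝ => q.eval t) x = Polynomial.aeval x q := by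
  induction q using Polynomial.induction_on' with
  | add p r hp hr =>
      rw [map_add, ← hp, ← hr, ← cfc_add (a := x) (fun t : ℝ => p.eval t)
        (fun t : ℝ => r.eval t) (Polynomial.continuous p).continuousOn
        (Polynomial.continuous r).continuousOn]
      exact cfc_congr fun t _ => by simp
  | monomial n a =>
      rw [Polynomial.aeval_monomial]
      have heq : (fun t : ℝ => (Polynomial.monomial n a).eval t) = fun t : ℝ => a * t ^ n := by
        ext t; simp [Polynomial.eval_monomial]
      rw [heq, cfc_const_mul a (fun t : ℝ => t ^ n) x
        (continuous_pow n).continuousOn, cfc_pow_id x n, Algebra.smul_def]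

lemma mul_aeval_mem_inMultDomain (E : A →ₗ[ℂ] A) {x : A} (hx : InMultDomain E x)
    (q : Polynomial ℝ) : InMultDomain E (x * Polynomial.aeval x q) := by
  induction q using Polynomial.induction_on' with
  | add p r hp hr =>
      rw [map_add, mul_add]
      exact hp.add hr
  | monomial n a =>
      rw [Polynomial.aeval_monomial, ← Algebra.smul_def, mul_smul_comm]
      have : x * x ^ n = x ^ (n + 1) := (pow_succ' x n).symm
      rw [this]
      exact (hx.pow_succ_mem n).rsmul a

lemma aeval_mem_inMultDomain (E : A →ₗ[ℂ] A) {x : A} (hx : InMultDomain E x)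
    (q : Polynomial ℝ) (hq : q.coeff 0 = 0) :
    InMultDomain E (Polynomial.aeval x q) := by
  obtain ⟨q', rfl⟩ := Polynomial.X_dvd_iff.mpr hq
  rw [map_mul, Polynomial.aeval_X]
  exact mul_aeval_mem_inMultDomain E hx q'

open Polynomial in
lemma sqrt_mem_inMultDomain (E : A →ₗ[ℂ] A) (hE : Continuous E) {x : A} (hx0 : 0 ≤ x)
    (hx : InMultDomain E x) : InMultDomain E (CFC.sqrt x) := by
  cases subsingleton_or_nontrivial A with
  | inl hsub => intro y; constructor <;> exact Subsingleton.elim _ _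
  | inr hnt =>
    have hxsa : IsSelfAdjoint x := .of_nonneg hx0
    set f : ℝ → ℝ := fun t => ((NNReal.sqrt t.toNNReal : ℝ≥0) : ℝ) with hf_def
    have hf_cont : Continuous f := by
      rw [hf_def]
      exact NNReal.continuous_coe.comp (NNReal.continuous_sqrt.comp continuous_real_toNNReal)
    have hf0 : f 0 = 0 := by simp [hf_def]
    have hsqrt_eq : CFC.sqrt x = cfc f x := by
      rw [CFC.sqrt, cfcₙ_nnreal_eq_real NNReal.sqrt x hx0,
        cfcₙ_eq_cfc (hf_cont.continuousOn) hf0]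
    rw [hsqrt_eq]
    have hclosed := isClosed_inMultDomain E hE
    have : cfc f x ∈ closure {z : A | InMultDomain E z} := by
      rw [Metric.mem_closure_iff]
      intro ε hε
      obtain ⟨p, hp⟩ := exists_polynomial_near_of_continuousOn (-‖x‖) ‖x‖ f
        hf_cont.continuousOn (ε / 3) (by positivity)
      set q : Polynomial ℝ := p - Polynomial.C (p.eval 0) with hq_def
      have hq0 : q.coeff 0 = 0 := by
        rw [hq_def]
        simp [Polynomial.coeff_zero_eq_eval_zero]
      have hz_mem : InMultDomain E (Polynomial.aeval x q) :=
        aeval_mem_inMultDomain E hx q hq0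
      refine ⟨Polynomial.aeval x q, hz_mem, ?_⟩
      rw [dist_eq_norm, ← cfc_polynomial_eval x hxsa q,
        ← cfc_sub (a := x) f (fun t : ℝ => q.eval t) hf_cont.continuousOn
          (Polynomial.continuous q).continuousOn]
      have hbound : ∀ t ∈ spectrum ℝ x, ‖f t - q.eval t‖ ≤ 2 * (ε / 3) := by
        intro t ht
        have htmem : t ∈ Set.Icc (-‖x‖) ‖x‖ := by
          have := spectrum.norm_le_norm_of_mem ht
          rw [Real.norm_eq_abs] at this
          exact abs_le.mp this
        have h0mem : (0 : ℝ) ∈ Set.Icc (-‖x‖) ‖x‖ :=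
          ⟨neg_nonpos.mpr (norm_nonneg x), norm_nonneg x⟩
        have h1 := hp t htmem
        have h2 := hp 0 h0mem
        rw [hf0, sub_zero] at h2
        rw [hq_def, Real.norm_eq_abs]
        simp only [Polynomial.eval_sub, Polynomial.eval_C]
        calc |f t - (p.eval t - p.eval 0)| = |(f t - p.eval t) + p.eval 0| := by ring_nf
          _ ≤ |f t - p.eval t| + |p.eval 0| := abs_add_le _ _
          _ ≤ ε / 3 + ε / 3 := by
              rw [abs_sub_comm (f t)]
              exact add_le_add h1.le h2.le
          _ = 2 * (ε / 3) := by ring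
      calc ‖cfc (fun t => f t - q.eval t) x‖ ≤ 2 * (ε / 3) :=
            norm_cfc_le (by positivity) hbound
        _ < ε := by linarith
    rwa [hclosed.closure_eq] at this

end CfcPoly

/-- a channel preserves fidelity (and hence the Bures distance) between density
elements of its multiplicative domain. -/
theorem channel_isometric_on_mult_domain {A : Type*}
    [CStarAlgebra A] [PartialOrder A] [StarOrderedRing A]
    (τ : A →ₗ[ℂ] ℂ)
    (hpos : ∀ a : A, 0 ≤ a → 0 ≤ τ a)
    (hfaith : ∀ a : A, 0 ≤ a → τ a = 0 → a = 0)
    (htracial : ∀ x y : A, τ (x * y) = τ (y * x))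
    (E : A →ₗ[ℂ] A)
    (hEpos : ∀ a : A, 0 ≤ a → 0 ≤ E a)
    (hEtrace : ∀ x : A, τ (E x) = τ x)
    (σ ρ : A) (hσ : 0 ≤ σ) (hρ : 0 ≤ ρ) (hσ1 : τ σ = 1) (hρ1 : τ ρ = 1)
    (hσm : InMultDomain E σ) (hρm : InMultDomain E ρ) :
    cFid τ (E σ) (E ρ) = cFid τ σ ρ ∧ cdB τ (E σ) (E ρ) = cdB τ σ ρ := by
  have hEc : Continuous E := E_continuous E hEpos
  -- square roots commute with E on the multiplicative domain
  have key : ∀ x : A, 0 ≤ x → InMultDomain E x → CFC.sqrt (E x) = E (CFC.sqrt x) := by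
    intro x hx0 hxm
    have hs_mem : InMultDomain E (CFC.sqrt x) := sqrt_mem_inMultDomain E hEc hx0 hxm
    have hmul : E (CFC.sqrt x) * E (CFC.sqrt x) = E x := by
      rw [← (hs_mem (CFC.sqrt x)).1, CFC.sqrt_mul_sqrt_self x hx0]
    exact CFC.sqrt_unique hmul (hEpos _ (CFC.sqrt_nonneg x))
  set r : A := CFC.sqrt ρ with hr_def
  have hr0 : 0 ≤ r := CFC.sqrt_nonneg ρ
  have hr_mem : InMultDomain E r := sqrt_mem_inMultDomain E hEc hρ hρm
  have hEr : CFC.sqrt (E ρ) = E r := key ρ hρ hρm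
  set z : A := r * σ * r with hz_def
  have hz0 : 0 ≤ z := by
    rw [hz_def, show r * σ * r = r * σ * star r from by
      rw [(IsSelfAdjoint.of_nonneg hr0).star_eq]]
    exact star_right_conjugate_nonneg hσ r
  have hz_mem : InMultDomain E z := (hr_mem.mul hσm).mul hr_mem
  have hEz : E z = E r * E σ * E r := by
    rw [hz_def, ((hr_mem.mul hσm) r).1, (hr_mem σ).1]
  have hFid : cFid τ (E σ) (E ρ) = cFid τ σ ρ := by
    unfold cFid
    rw [hEr, ← hEz, key z hz0 hz_mem, hEtrace, ← hz_def]
  exact ⟨hFid, by unfold cdB; rw [hFid]⟩
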